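/- arXiv:1709.04873 — 3 statements merged into one kernel-verified Lean document; each statement's English description precedes it below -/
import Mathlib

section
/- Let (a_i) and (b_i) be nets of contractive bounded operators on a Hilbert space H. If (a_i + b_i)/2 converges to the identity operator in operator norm, then a_i → 1 and b_i → 1 in operator norm. -/
open Filter

lemma key_pt {H : Type*} [NormedAddCommGroup H] [InnerProductSpace ℂ H]
    (a b : H →L[ℂ] H) (ha : ‖a‖ ≤ 1) (hb : ‖b‖ ≤ 1) (x : H) :
    ‖(a - b) x‖ ≤ Real.sqrt (8 * ‖(2⁻¹ : ℂ) • (a + b) - 1‖) * ‖x‖ := by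
  set d := ‖(2⁻¹ : ℂ) • (a + b) - 1‖ with hd
  have hd0 : 0 ≤ d := norm_nonneg _
  have hu : ‖a x‖ ≤ ‖x‖ := by
    calc ‖a x‖ ≤ ‖a‖ * ‖x‖ := a.le_opNorm x
    _ ≤ 1 * ‖x‖ := by gcongr
    _ = ‖x‖ := one_mul _
  have hv : ‖b x‖ ≤ ‖x‖ := by
    calc ‖b x‖ ≤ ‖b‖ * ‖x‖ := b.le_opNorm x
    _ ≤ 1 * ‖x‖ := by gcongr
    _ = ‖x‖ := one_mul _
  have hmx : ‖(2⁻¹ : ℂ) • (a x + b x) - x‖ ≤ d * ‖x‖ := by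
    have h0 := ((2⁻¹ : ℂ) • (a + b) - 1).le_opNorm x
    have e : ((2⁻¹ : ℂ) • (a + b) - 1) x = (2⁻¹ : ℂ) • (a x + b x) - x := by
      simp [smul_add]
    rw [e] at h0
    exact h0
  have hnorm : ‖(2⁻¹ : ℂ) • (a x + b x)‖ = 2⁻¹ * ‖a x + b x‖ := by
    rw [norm_smul]; norm_num
  have hn : 2⁻¹ * ‖a x + b x‖ ≥ ‖x‖ - d * ‖x‖ := by
    have h1 : ‖x‖ - ‖(2⁻¹ : ℂ) • (a x + b x)‖ ≤ ‖x - (2⁻¹ : ℂ) • (a x + b x)‖ :=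
      norm_sub_norm_le _ _
    rw [norm_sub_rev] at h1
    rw [hnorm] at h1
    linarith [hmx, h1]
  have hpar := parallelogram_law_with_norm ℂ (a x) (b x)
  have hsq : ‖a x - b x‖ ^ 2 ≤ 8 * d * ‖x‖ ^ 2 := by
    rcases le_or_gt d 1 with hle | hgt
    · have hn2 : ‖a x + b x‖ ≥ 2 * ‖x‖ - 2 * d * ‖x‖ := by linarith
      have hnn : (0:ℝ) ≤ 2 * ‖x‖ - 2 * d * ‖x‖ := by
        have : d * ‖x‖ ≤ 1 * ‖x‖ := by gcongr
        linarith
      have hsq2 : ‖a x + b x‖ ^ 2 ≥ (2 * ‖x‖ - 2 * d * ‖x‖) ^ 2 := by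
        exact pow_le_pow_left₀ hnn hn2 2
      have hpar' : ‖a x + b x‖ ^ 2 + ‖a x - b x‖ ^ 2 = 2 * (‖a x‖ ^ 2 + ‖b x‖ ^ 2) := by
        rw [sq, sq, sq, sq]; linarith [hpar]
      nlinarith [hpar', hsq2, hu, hv, norm_nonneg (a x), norm_nonneg (b x),
        sq_nonneg (d * ‖x‖), norm_nonneg x]
    · have h2 : ‖a x - b x‖ ≤ 2 * ‖x‖ := by
        calc ‖a x - b x‖ ≤ ‖a x‖ + ‖b x‖ := norm_sub_le _ _
        _ ≤ 2 * ‖x‖ := by linarith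
      nlinarith [norm_nonneg (a x - b x), norm_nonneg x]
  calc ‖(a - b) x‖ = Real.sqrt (‖a x - b x‖ ^ 2) := by
        rw [Real.sqrt_sq (norm_nonneg _)]; simp
  _ ≤ Real.sqrt (8 * d * ‖x‖ ^ 2) := Real.sqrt_le_sqrt hsq
  _ = Real.sqrt (8 * d) * ‖x‖ := by
        rw [mul_assoc] at *
        rw [show (8:ℝ) * (d * ‖x‖^2) = (8*d) * ‖x‖^2 by ring,
          Real.sqrt_mul (by positivity), Real.sqrt_sq (norm_nonneg _)]

lemma key {H : Type*} [NormedAddCommGroup H] [InnerProductSpace ℂ H]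
    (a b : H →L[ℂ] H) (ha : ‖a‖ ≤ 1) (hb : ‖b‖ ≤ 1) :
    ‖a - b‖ ≤ Real.sqrt (8 * ‖(2⁻¹ : ℂ) • (a + b) - 1‖) :=
  ContinuousLinearMap.opNorm_le_bound _ (Real.sqrt_nonneg _) (key_pt a b ha hb)

/-- If nets `(a i)`, `(b i)` of contractive bounded operators on a Hilbert space have
midpoints converging in operator norm to the identity, then both nets converge to `1`. -/
theorem stmt1 {H : Type*} [NormedAddCommGroup H] [InnerProductSpace ℂ H] [CompleteSpace H]
    {ι : Type*} (l : Filter ι) [l.NeBot]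
    (a b : ι → H →L[ℂ] H)
    (ha : ∀ i, ‖a i‖ ≤ 1) (hb : ∀ i, ‖b i‖ ≤ 1)
    (h : Tendsto (fun i => (2⁻¹ : ℂ) • (a i + b i)) l (nhds (1 : H →L[ℂ] H))) :
    Tendsto a l (nhds (1 : H →L[ℂ] H)) ∧ Tendsto b l (nhds (1 : H →L[ℂ] H)) := by
  have hdz : Tendsto (fun i => ‖(2⁻¹ : ℂ) • (a i + b i) - 1‖) l (nhds 0) := by
    rw [← tendsto_sub_nhds_zero_iff] at h
    simpa using h.norm
  have hsz : Tendsto (fun i => Real.sqrt (8 * ‖(2⁻¹ : ℂ) • (a i + b i) - 1‖)) l (nhds 0) := by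
    have : Tendsto (fun i => (8:ℝ) * ‖(2⁻¹ : ℂ) • (a i + b i) - 1‖) l (nhds 0) := by
      simpa using hdz.const_mul (8:ℝ)
    have h2 := (Real.continuous_sqrt.tendsto 0).comp this
    rw [Real.sqrt_zero] at h2
    exact h2
  have hab : Tendsto (fun i => a i - b i) l (nhds 0) := by
    rw [tendsto_zero_iff_norm_tendsto_zero]
    exact squeeze_zero (fun i => norm_nonneg _) (fun i => key (a i) (b i) (ha i) (hb i)) hsz
  have hA : Tendsto a l (nhds (1 : H →L[ℂ] H)) := by
    have := h.add ((hab.const_smul ((2⁻¹ : ℂ))))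
    simp only [smul_zero, add_zero] at this
    convert this using 2 with i
    · ext x; simp [smul_add, smul_sub]; module
  have hB : Tendsto b l (nhds (1 : H →L[ℂ] H)) := by
    have := h.sub ((hab.const_smul ((2⁻¹ : ℂ))))
    simp only [smul_zero, sub_zero] at this
    convert this using 2 with i
    · ext x; simp [smul_add, smul_sub]; module
  exact ⟨hA, hB⟩
end

section
/- Let C be a nonempty closed convex subset of a Hilbert space H and let ξ be the unique element of minimal norm in C. If x is a bounded operator on H with ‖x‖ ≤ 1 and x(C) ⊆ C, then xξ = ξ. -/
/-- If `ξ` is the (unique) element of minimal norm of a nonempty closed convex set `C`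
in a Hilbert space and `x` is a contraction mapping `C` into itself, then `xξ = ξ`. -/
theorem stmt5 {H : Type*} [NormedAddCommGroup H] [InnerProductSpace ℂ H] [CompleteSpace H]
    (C : Set H) (hne : C.Nonempty) (hcl : IsClosed C) (hconv : Convex ℝ C)
    (ξ : H) (hξC : ξ ∈ C) (hmin : ∀ c ∈ C, ‖ξ‖ ≤ ‖c‖)
    (x : H →L[ℂ] H) (hx : ‖x‖ ≤ 1) (hxC : ∀ c ∈ C, x c ∈ C) :
    x ξ = ξ := by
  have h1 : x ξ ∈ C := hxC ξ hξC
  have h2 : ‖x ξ‖ ≤ ‖ξ‖ := by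
    calc ‖x ξ‖ ≤ ‖x‖ * ‖ξ‖ := x.le_opNorm ξ
    _ ≤ 1 * ‖ξ‖ := by gcongr
    _ = ‖ξ‖ := one_mul _
  have h3 : ‖ξ‖ ≤ ‖x ξ‖ := hmin _ h1
  have heq : ‖x ξ‖ = ‖ξ‖ := le_antisymm h2 h3
  have hm : (1/2 : ℝ) • x ξ + (1/2 : ℝ) • ξ ∈ C :=
    hconv h1 hξC (by norm_num) (by norm_num) (by norm_num)
  have hmnorm : ‖(1/2 : ℝ) • x ξ + (1/2 : ℝ) • ξ‖ = (1/2 : ℝ) * ‖x ξ + ξ‖ := by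
    rw [← smul_add, norm_smul]
    norm_num
  have h4 : 2 * ‖ξ‖ ≤ ‖x ξ + ξ‖ := by
    have := hmin _ hm
    rw [hmnorm] at this
    linarith
  haveI : InnerProductSpace ℝ H := InnerProductSpace.rclikeToReal ℂ H
  have hpar := parallelogram_law_with_norm ℝ (x ξ) ξ
  have h5 : ‖x ξ - ξ‖ = 0 := by
    have h6 : 2 * ‖ξ‖ * (2 * ‖ξ‖) ≤ ‖x ξ + ξ‖ * ‖x ξ + ξ‖ :=
      mul_le_mul h4 h4 (by positivity) (norm_nonneg _)
    rw [heq] at hpar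
    have h7 : ‖x ξ - ξ‖ * ‖x ξ - ξ‖ ≤ 0 := by nlinarith
    exact mul_self_eq_zero.mp (le_antisymm h7 (mul_self_nonneg _))
  exact sub_eq_zero.mp (norm_eq_zero.mp h5)
end

section
/- Let G be a group and θ : G → ℝ with θ(e) = 0 and θ(γ⁻¹) = θ(γ) for all γ ∈ G. If for every t ≥ 0 the function γ ↦ e^{−tθ(γ)} is positive definite on G, then θ is conditionally negative definite. -/
open scoped ComplexOrder
/-- If `θ : G → ℝ` vanishes at the identity, is symmetric under inversion, and
`γ ↦ exp(−t θ(γ))` is positive definite for every `t ≥ 0`, then `θ` is conditionally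
negative definite. -/
theorem stmt11 {G : Type*} [Group G] (θ : G → ℝ)
    (h1 : θ 1 = 0) (hsymm : ∀ γ : G, θ γ⁻¹ = θ γ)
    (hpd : ∀ t : ℝ, 0 ≤ t → ∀ (n : ℕ) (γ : Fin n → G) (c : Fin n → ℂ),
      (0 : ℂ) ≤ ∑ i, ∑ j,
        (starRingEnd ℂ) (c i) * c j * (Real.exp (-t * θ ((γ i)⁻¹ * γ j)) : ℂ)) :
    ∀ (n : ℕ) (γ : Fin n → G) (c : Fin n → ℝ), (∑ i, c i) = 0 →
      (∑ i, ∑ j, c i * c j * θ ((γ i)⁻¹ * γ j)) ≤ 0 := by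
  intro n γ c hc
  set f : ℝ → ℝ := fun t => ∑ i, ∑ j, c i * c j * Real.exp (-t * θ ((γ i)⁻¹ * γ j)) with hf
  have hf0 : f 0 = 0 := by
    simp only [hf, neg_zero, zero_mul, Real.exp_zero, mul_one]
    rw [← Finset.sum_mul_sum, hc, zero_mul]
  have hfpos : ∀ t : ℝ, 0 ≤ t → 0 ≤ f t := by
    intro t ht
    have := hpd t ht n γ (fun i => (c i : ℂ))
    have heq : (∑ i, ∑ j, (starRingEnd ℂ) ((c i : ℂ)) * (c j : ℂ) *
        (Real.exp (-t * θ ((γ i)⁻¹ * γ j)) : ℂ)) = ((f t : ℝ) : ℂ) := by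
      simp only [hf, Complex.conj_ofReal]
      push_cast
      simp [neg_mul]
    rw [heq] at this
    exact_mod_cast this
  -- derivative of f at 0
  have hderiv : HasDerivAt f (-(∑ i, ∑ j, c i * c j * θ ((γ i)⁻¹ * γ j))) 0 := by
    have : HasDerivAt f (∑ i, ∑ j, -(c i * c j * θ ((γ i)⁻¹ * γ j))) 0 := by
      apply HasDerivAt.fun_sum
      intro i _
      apply HasDerivAt.fun_sum
      intro j _
      have h1 : HasDerivAt (fun t : ℝ => -t * θ ((γ i)⁻¹ * γ j))
          (-θ ((γ i)⁻¹ * γ j)) 0 := by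
        simpa using ((hasDerivAt_id (0:ℝ)).neg.mul_const (θ ((γ i)⁻¹ * γ j)))
      have h2 := h1.exp
      have h3 := h2.const_mul (c i * c j)
      convert h3 using 1
      · rfl
      simp
    simpa [Finset.sum_neg_distrib] using this
  -- slope tendsto
  have hslope := hasDerivAt_iff_tendsto_slope.mp hderiv
  have hslope' : Filter.Tendsto (slope f 0) (nhdsWithin 0 (Set.Ioi 0))
      (nhds (-(∑ i, ∑ j, c i * c j * θ ((γ i)⁻¹ * γ j)))) :=
    hslope.mono_left (nhdsWithin_mono 0 (fun x hx => ne_of_gt hx))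
  have hnonneg : 0 ≤ -(∑ i, ∑ j, c i * c j * θ ((γ i)⁻¹ * γ j)) := by
    refine ge_of_tendsto hslope' ?_
    filter_upwards [self_mem_nhdsWithin] with t ht
    have ht' : (0:ℝ) < t := ht
    have h := div_nonneg (hfpos t ht'.le) ht'.le
    simpa [slope_def_field, hf0] using h
  linarith
end
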